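/- arXiv:2603.16081 — 2 statements merged into one kernel-verified Lean document; each statement's English description precedes it below -/
import Mathlib

section
/- Let V be a locally finite, connected weighted graph satisfying Assumption A (with data x₀, R₀, α, and pseudo-metric d), and let θ₁ ≥ 2, θ₂ ≥ 2 satisfy 2θ₁/θ₂ ≥ 1+α. Let φ ∈ C²([0,∞)) with 0 ≤ φ ≤ 1, φ ≡ 1 on [0,1], φ ≡ 0 on [2,∞), φ' ≤ 0, and for R > 0 set φ_R(x,t) = φ((t^{θ₂} + d(x,x₀)^{θ₁})/R^{θ₁}). Then there exists a constant C > 0 such that for every R ≥ R₀ and every (x,t) ∈ V×[0,∞), |∂²_t φ_R(x,t)| ≤ C·R^{−2θ₁/θ₂}·1_{E_R}(x,t), where E_R = {(x,t) ∈ V×[0,∞) : R^{θ₁} ≤ d(x,x₀)^{θ₁} + t^{θ₂} ≤ 2R^{θ₁}}. -/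
open MeasureTheory Filter

namespace GraphWave

variable {V : Type*}

/-- A weighted graph: symmetric edge weights without loops, with finite sums at
each vertex, together with a positive vertex weight. -/
structure WeightedGraph (V : Type*) where
  ω : V → V → ℝ
  μ : V → ℝ
  ω_nonneg : ∀ x y, 0 ≤ ω x y
  ω_self : ∀ x, ω x x = 0
  ω_symm : ∀ x y, ω x y = ω y x
  ω_summable : ∀ x, Summable fun y => ω x y
  μ_pos : ∀ x, 0 < μ x

/-- Adjacency: `y ∼ x` iff `ω x y > 0`. -/
def WeightedGraph.Adj (G : WeightedGraph V) (x y : V) : Prop := 0 < G.ω x y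

/-- Local finiteness: each vertex has finitely many neighbours. -/
def WeightedGraph.LocallyFinite (G : WeightedGraph V) : Prop :=
  ∀ x : V, {y : V | G.Adj x y}.Finite

/-- Connectedness: any two vertices are joined by a finite path of neighbours. -/
def WeightedGraph.Connected (G : WeightedGraph V) : Prop :=
  ∀ x y : V, ∃ n : ℕ, ∃ f : ℕ → V, f 0 = x ∧ f n = y ∧ ∀ i < n, G.Adj (f i) (f (i + 1))

/-- The graph Laplacian `Δ f (x) = (1/μ x) ∑_{y ∼ x} ω x y (f y - f x)`. -/
noncomputable def WeightedGraph.lap (G : WeightedGraph V) (f : V → ℝ) (x : V) : ℝ :=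
  (G.μ x)⁻¹ * ∑' y : V, G.ω x y * (f y - f x)

/-- A pseudo-metric on `V`. -/
structure IsPseudoMetric (d : V → V → ℝ) : Prop where
  nonneg : ∀ x y, 0 ≤ d x y
  symm : ∀ x y, d x y = d y x
  refl : ∀ x, d x x = 0
  triangle : ∀ x y z, d x y ≤ d x z + d z y

/-- The ball `B_R(x₀)` with respect to the pseudo-metric `d`. -/
def ball (d : V → V → ℝ) (x₀ : V) (R : ℝ) : Set V := {y : V | d y x₀ ≤ R}

/-- The set of values `d x y` over edges `x ∼ y`; its sup is the jump size. -/
def jumpSet (G : WeightedGraph V) (d : V → V → ℝ) : Set ℝ :=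
  {r : ℝ | ∃ x y, G.Adj x y ∧ r = d x y}

/-- Assumption A of the paper. -/
structure AssumptionA (G : WeightedGraph V) (d : V → V → ℝ) (x₀ : V) (R₀ α : ℝ) : Prop where
  deg_le : ∃ C₁ > 0, ∀ x : V, (∑' y : V, G.ω x y) ≤ C₁ * G.μ x
  pm : IsPseudoMetric d
  jump_bdd : BddAbove (jumpSet G d)
  ball_fin : ∀ (x : V) (R : ℝ), 0 < R → (ball d x R).Finite
  R₀_pos : 0 < R₀
  α_nonneg : 0 ≤ α
  α_le_one : α ≤ 1
  lap_dist : ∃ C₂ > 0, ∀ x : V, x ∉ ball d x₀ R₀ →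
      G.lap (fun y => d y x₀) x ≤ C₂ / d x x₀ ^ α

/-- The annulus `E_R ⊆ V × [0,∞)`. -/
def ER (d : V → V → ℝ) (x₀ : V) (θ₁ θ₂ R : ℝ) : Set (V × ℝ) :=
  {z : V × ℝ | 0 ≤ z.2 ∧ R ^ θ₁ ≤ d z.1 x₀ ^ θ₁ + z.2 ^ θ₂ ∧
    d z.1 x₀ ^ θ₁ + z.2 ^ θ₂ ≤ 2 * R ^ θ₁}

/-- The enlarged annulus `F_R ⊆ V × [0,∞)`. -/
def FR (d : V → V → ℝ) (x₀ : V) (θ₁ θ₂ R : ℝ) : Set (V × ℝ) :=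
  {z : V × ℝ | 0 ≤ z.2 ∧ (R / 2) ^ θ₁ ≤ d z.1 x₀ ^ θ₁ + z.2 ^ θ₂ ∧
    d z.1 x₀ ^ θ₁ + z.2 ^ θ₂ ≤ (4 * R) ^ θ₁}

/-- Sum of `f` over the ball `B_R(x₀)`. -/
noncomputable def ballSum (d : V → V → ℝ) (x₀ : V) (R : ℝ) (f : V → ℝ) : ℝ :=
  ∑' y : ball d x₀ R, f y.1

/-- Admissible test functions: non-negative, compactly supported on `V × [0,∞)`
(finitely many vertices, bounded time support), and `C²` in time. -/
structure IsTestFunction (φ : V → ℝ → ℝ) : Prop where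
  nonneg : ∀ x t, 0 ≤ φ x t
  finite_spt : {x : V | ∃ t : ℝ, φ x t ≠ 0}.Finite
  bdd_spt : ∃ T : ℝ, ∀ (x : V) (t : ℝ), T ≤ t → φ x t = 0
  smooth : ∀ x, ContDiff ℝ 2 (φ x)

/-- Weak solution of the system `u_tt - Δu ≥ h₁|v|^p`, `v_tt - Δv ≥ h₂|u|^q`
with initial data `(u₀, u₁, v₀, v₁)`. -/
structure IsWeakSolSys (G : WeightedGraph V) (h₁ h₂ : V → ℝ → ℝ) (p q : ℝ)
    (u v : V → ℝ → ℝ) (u₀ u₁ v₀ v₁ : V → ℝ) : Prop where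
  u_L1loc : ∀ (x : V) (T : ℝ), IntegrableOn (u x) (Set.Ioc 0 T)
  u_Lqloc : ∀ (x : V) (T : ℝ), IntegrableOn (fun t => h₂ x t * |u x t| ^ q) (Set.Ioc 0 T)
  v_L1loc : ∀ (x : V) (T : ℝ), IntegrableOn (v x) (Set.Ioc 0 T)
  v_Lploc : ∀ (x : V) (T : ℝ), IntegrableOn (fun t => h₁ x t * |v x t| ^ p) (Set.Ioc 0 T)
  ineq_u : ∀ φ : V → ℝ → ℝ, IsTestFunction φ →
      (∫ t in Set.Ioi (0 : ℝ), ∑' x : V, u x t * deriv (deriv (φ x)) t * G.μ x) -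
        (∫ t in Set.Ioi (0 : ℝ), ∑' x : V, G.lap (fun y => u y t) x * φ x t * G.μ x) +
        (∑' x : V, u₀ x * deriv (φ x) 0 * G.μ x) -
        (∑' x : V, u₁ x * φ x 0 * G.μ x) ≥
      ∫ t in Set.Ioi (0 : ℝ), ∑' x : V, h₁ x t * |v x t| ^ p * φ x t * G.μ x
  ineq_v : ∀ φ : V → ℝ → ℝ, IsTestFunction φ →
      (∫ t in Set.Ioi (0 : ℝ), ∑' x : V, v x t * deriv (deriv (φ x)) t * G.μ x) -
        (∫ t in Set.Ioi (0 : ℝ), ∑' x : V, G.lap (fun y => v y t) x * φ x t * G.μ x) +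
        (∑' x : V, v₀ x * deriv (φ x) 0 * G.μ x) -
        (∑' x : V, v₁ x * φ x 0 * G.μ x) ≥
      ∫ t in Set.Ioi (0 : ℝ), ∑' x : V, h₂ x t * |u x t| ^ q * φ x t * G.μ x

/-- Weak solution of the single inequality `u_tt - Δu ≥ h|u|^p`. -/
structure IsWeakSol (G : WeightedGraph V) (h : V → ℝ → ℝ) (p : ℝ)
    (u : V → ℝ → ℝ) (u₀ u₁ : V → ℝ) : Prop where
  u_L1loc : ∀ (x : V) (T : ℝ), IntegrableOn (u x) (Set.Ioc 0 T)
  u_Lploc : ∀ (x : V) (T : ℝ), IntegrableOn (fun t => h x t * |u x t| ^ p) (Set.Ioc 0 T)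
  ineq : ∀ φ : V → ℝ → ℝ, IsTestFunction φ →
      (∫ t in Set.Ioi (0 : ℝ), ∑' x : V, u x t * deriv (deriv (φ x)) t * G.μ x) -
        (∫ t in Set.Ioi (0 : ℝ), ∑' x : V, G.lap (fun y => u y t) x * φ x t * G.μ x) +
        (∑' x : V, u₀ x * deriv (φ x) 0 * G.μ x) -
        (∑' x : V, u₁ x * φ x 0 * G.μ x) ≥
      ∫ t in Set.Ioi (0 : ℝ), ∑' x : V, h x t * |u x t| ^ p * φ x t * G.μ x

/-- Membership in the weighted space `X_δ`. -/
def MemX (G : WeightedGraph V) (d : V → V → ℝ) (x₀ : V) (δ : ℝ) (f : V → ℝ) : Prop :=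
  Summable fun x : V => |f x| * Real.exp (-δ * d x x₀) * G.μ x


private lemma deriv_zero_of_right_const' {f : ℝ → ℝ} {a b c : ℝ} (hf : DifferentiableAt ℝ f a)
    (hab : a < b) (h : ∀ x ∈ Set.Ico a b, f x = c) : deriv f a = 0 := by
  have h1 : derivWithin f (Set.Ici a) a = derivWithin (fun _ => c) (Set.Ici a) a := by
    apply Filter.EventuallyEq.derivWithin_eq
    · filter_upwards [Ico_mem_nhdsGE_of_mem (Set.left_mem_Ico.2 hab)] with x hx using h x hx
    · exact h a (Set.left_mem_Ico.2 hab)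
  have h2 : deriv f a = derivWithin f (Set.Ici a) a :=
    (hf.derivWithin (uniqueDiffOn_Ici a a Set.self_mem_Ici)).symm
  rw [h2, h1]
  exact congrFun (derivWithin_const _ _) _

private lemma key_formula' (θ₂ : ℝ) (hθ₂ : 2 ≤ θ₂) (b c : ℝ) (φ : ℝ → ℝ) (hφ : ContDiff ℝ 2 φ)
    (t : ℝ) :
    deriv (deriv (fun τ => φ ((τ ^ θ₂ + b) / c))) t =
      deriv (deriv φ) ((t ^ θ₂ + b) / c) * (θ₂ * t ^ (θ₂ - 1) / c) ^ 2
        + deriv φ ((t ^ θ₂ + b) / c) * (θ₂ * ((θ₂ - 1) * t ^ (θ₂ - 2)) / c) := by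
  have hφd : Differentiable ℝ φ := hφ.differentiable (by norm_num)
  have hφ1 : ContDiff ℝ 1 (deriv φ) := by
    have := (contDiff_succ_iff_deriv (n := 1)).mp (by exact_mod_cast hφ)
    exact this.2.2
  have hφd2 : Differentiable ℝ (deriv φ) := hφ1.differentiable one_ne_zero
  have hs : ∀ τ : ℝ, HasDerivAt (fun τ : ℝ => (τ ^ θ₂ + b) / c) (θ₂ * τ ^ (θ₂ - 1) / c) τ :=
    fun τ => ((Real.hasDerivAt_rpow_const (Or.inr (by linarith))).add_const b).div_const c
  have h1 : deriv (fun τ => φ ((τ ^ θ₂ + b) / c))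
      = fun τ => deriv φ ((τ ^ θ₂ + b) / c) * (θ₂ * τ ^ (θ₂ - 1) / c) := by
    funext τ
    exact (((hφd _).hasDerivAt).comp τ (hs τ)).deriv
  rw [h1]
  have hu : HasDerivAt (fun τ : ℝ => deriv φ ((τ ^ θ₂ + b) / c))
      (deriv (deriv φ) ((t ^ θ₂ + b) / c) * (θ₂ * t ^ (θ₂ - 1) / c)) t :=
    ((hφd2 _).hasDerivAt).comp t (hs t)
  have hv : HasDerivAt (fun τ : ℝ => θ₂ * τ ^ (θ₂ - 1) / c)
      (θ₂ * ((θ₂ - 1) * t ^ (θ₂ - 1 - 1)) / c) t :=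
    ((Real.hasDerivAt_rpow_const (Or.inr (by linarith))).const_mul θ₂).div_const c
  have hD : deriv (fun τ => deriv φ ((τ ^ θ₂ + b) / c) * (θ₂ * τ ^ (θ₂ - 1) / c)) t = _ :=
    (hu.mul hv).deriv
  rw [hD]
  have h21 : θ₂ - 1 - 1 = θ₂ - 2 := by ring
  rw [h21]; ring

private lemma vanish_hi' (φ : ℝ → ℝ) (hφ0 : ∀ r, (2:ℝ) ≤ r → φ r = 0) :
    ∀ r, 2 < r → deriv φ r = 0 ∧ deriv (deriv φ) r = 0 := by
  have hd : ∀ r, 2 < r → deriv φ r = 0 := by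
    intro r hr
    have h : φ =ᶠ[nhds r] fun _ => (0:ℝ) := by
      filter_upwards [Ioi_mem_nhds hr] with y hy using hφ0 y hy.le
    rw [h.deriv_eq]; simp
  intro r hr
  refine ⟨hd r hr, ?_⟩
  have h : deriv φ =ᶠ[nhds r] fun _ => (0:ℝ) := by
    filter_upwards [Ioi_mem_nhds hr] with y hy using hd y hy
  rw [h.deriv_eq]; simp

private lemma vanish_lo' (φ : ℝ → ℝ) (hφ : ContDiff ℝ 2 φ) (hφ1 : ∀ r ∈ Set.Icc (0:ℝ) 1, φ r = 1) :
    ∀ r ∈ Set.Ico (0:ℝ) 1, deriv φ r = 0 ∧ deriv (deriv φ) r = 0 := by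
  have hφd : Differentiable ℝ φ := hφ.differentiable (by norm_num)
  have hφ1' : ContDiff ℝ 1 (deriv φ) := by
    have := (contDiff_succ_iff_deriv (n := 1)).mp (by exact_mod_cast hφ)
    exact this.2.2
  have hφd2 : Differentiable ℝ (deriv φ) := hφ1'.differentiable one_ne_zero
  have hd : ∀ r ∈ Set.Ico (0:ℝ) 1, deriv φ r = 0 := by
    intro r hr
    exact deriv_zero_of_right_const' (hφd r) hr.2
      (fun x hx => hφ1 x ⟨le_trans hr.1 hx.1, hx.2.le⟩)
  intro r hr
  refine ⟨hd r hr, ?_⟩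
  exact deriv_zero_of_right_const' (hφd2 r) hr.2
    (fun x hx => hd x ⟨le_trans hr.1 hx.1, hx.2⟩)

/-- Lemma (cut-off estimate): `|∂²_t φ_R| ≤ C R^{-2θ₁/θ₂} 1_{E_R}`. -/
theorem dtt_cutoff_bound {V : Type*} [Countable V] [Infinite V]
    (G : WeightedGraph V) (d : V → V → ℝ) (x₀ : V) (R₀ α : ℝ)
    (hLF : G.LocallyFinite) (hConn : G.Connected)
    (hA : AssumptionA G d x₀ R₀ α)
    (θ₁ θ₂ : ℝ) (hθ₁ : 2 ≤ θ₁) (hθ₂ : 2 ≤ θ₂) (hθ : 1 + α ≤ 2 * θ₁ / θ₂)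
    (φ : ℝ → ℝ) (hφsm : ContDiff ℝ 2 φ)
    (hφ01 : ∀ r, 0 ≤ φ r ∧ φ r ≤ 1)
    (hφ1 : ∀ r ∈ Set.Icc (0 : ℝ) 1, φ r = 1)
    (hφ0 : ∀ r, 2 ≤ r → φ r = 0)
    (hφ' : ∀ r, 0 ≤ r → deriv φ r ≤ 0) :
    ∃ C > 0, ∀ R ≥ R₀, ∀ (x : V) (t : ℝ), 0 ≤ t →
      |deriv (deriv (fun τ => φ ((τ ^ θ₂ + d x x₀ ^ θ₁) / R ^ θ₁))) t| ≤
        C / R ^ (2 * θ₁ / θ₂) * Set.indicator (ER d x₀ θ₁ θ₂ R) (fun _ => (1 : ℝ)) (x, t) := by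
  have hφd : Differentiable ℝ φ := hφsm.differentiable (by norm_num)
  have hφ1' : ContDiff ℝ 1 (deriv φ) := by
    have := (contDiff_succ_iff_deriv (n := 1)).mp (by exact_mod_cast hφsm)
    exact this.2.2
  have hcont1 : Continuous (deriv φ) := hφ1'.continuous
  have hcont2 : Continuous (deriv (deriv φ)) := by
    have := (contDiff_succ_iff_deriv (n := 0)).mp (by exact_mod_cast hφ1')
    exact this.2.2.continuous
  obtain ⟨M₁, hM₁⟩ := (isCompact_Icc (a := (0:ℝ)) (b := 2)).exists_bound_of_continuousOn
    hcont1.continuousOn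
  obtain ⟨M₂, hM₂⟩ := (isCompact_Icc (a := (0:ℝ)) (b := 2)).exists_bound_of_continuousOn
    hcont2.continuousOn
  have hθ₂0 : (0:ℝ) < θ₂ := by linarith
  refine ⟨4 * θ₂ ^ 2 * (|M₂| + 1) + 2 * (θ₂ * (θ₂ - 1)) * (|M₁| + 1),
    by
      have p1 : (0:ℝ) < 4 * θ₂ ^ 2 * (|M₂| + 1) := by positivity
      have p2 : (0:ℝ) ≤ 2 * (θ₂ * (θ₂ - 1)) * (|M₁| + 1) := by
        apply mul_nonneg _ (by positivity)
        apply mul_nonneg (by norm_num)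
        exact mul_nonneg (by linarith) (by linarith)
      linarith, ?_⟩
  intro R hR x t ht
  have hR0 : 0 < R := lt_of_lt_of_le hA.R₀_pos hR
  have ha : 0 ≤ d x x₀ ^ θ₁ := Real.rpow_nonneg (hA.pm.nonneg x x₀) _
  have hc : 0 < R ^ θ₁ := Real.rpow_pos_of_pos hR0 _
  have ht2 : 0 ≤ t ^ θ₂ := Real.rpow_nonneg ht _
  rw [key_formula' θ₂ hθ₂ (d x x₀ ^ θ₁) (R ^ θ₁) φ hφsm t]
  set a := d x x₀ ^ θ₁ with ha_def
  set s := (t ^ θ₂ + a) / R ^ θ₁ with hs_def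
  by_cases hmem : (x, t) ∈ ER d x₀ θ₁ θ₂ R
  · rw [Set.indicator_of_mem hmem]
    obtain ⟨-, h1, h2⟩ := hmem
    -- h1 : R ^ θ₁ ≤ a + t ^ θ₂, h2 : a + t ^ θ₂ ≤ 2 * R ^ θ₁
    set L := R ^ (θ₁ / θ₂) with hL_def
    have hL : 0 < L := Real.rpow_pos_of_pos hR0 _
    have hLc : L ^ θ₂ = R ^ θ₁ := by
      rw [hL_def, ← Real.rpow_mul hR0.le, div_mul_cancel₀ _ (ne_of_gt hθ₂0)]
    have htle : t ≤ 2 ^ (1 / θ₂) * L := by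
      have h3 : t ^ θ₂ ≤ 2 * R ^ θ₁ := by linarith [h2]
      have h4 := Real.rpow_le_rpow ht2 h3 (by positivity : (0:ℝ) ≤ 1 / θ₂)
      have e1 : (t ^ θ₂) ^ (1 / θ₂) = t := by
        rw [← Real.rpow_mul ht, mul_one_div, div_self (ne_of_gt hθ₂0), Real.rpow_one]
      have e2 : (2 * R ^ θ₁) ^ (1 / θ₂) = 2 ^ (1 / θ₂) * L := by
        rw [Real.mul_rpow (by norm_num) hc.le, hL_def, ← Real.rpow_mul hR0.le, mul_one_div]
      rw [e1, e2] at h4; exact h4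
    have hpow : ∀ e : ℝ, 0 ≤ e → e ≤ θ₂ → t ^ e ≤ 2 * L ^ e := by
      intro e he heθ
      have h5 := Real.rpow_le_rpow ht htle he
      have h6 : ((2:ℝ) ^ (1 / θ₂) * L) ^ e = 2 ^ (1 / θ₂ * e) * L ^ e := by
        rw [Real.mul_rpow (by positivity) hL.le, ← Real.rpow_mul (by norm_num)]
      have h7 : (2:ℝ) ^ (1 / θ₂ * e) ≤ 2 ^ (1:ℝ) := by
        apply Real.rpow_le_rpow_of_exponent_le (by norm_num)
        rw [div_mul_eq_mul_div, one_mul]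
        exact (div_le_one hθ₂0).mpr heθ
      rw [Real.rpow_one] at h7
      calc t ^ e ≤ (2 ^ (1 / θ₂) * L) ^ e := h5
        _ = 2 ^ (1 / θ₂ * e) * L ^ e := h6
        _ ≤ 2 * L ^ e := mul_le_mul_of_nonneg_right h7 (Real.rpow_nonneg hL.le e)
    have hb1 : θ₂ * t ^ (θ₂ - 1) / R ^ θ₁ ≤ 2 * θ₂ / L := by
      have hp := hpow (θ₂ - 1) (by linarith) (by linarith)
      have hL1 : L ^ (θ₂ - 1) = R ^ θ₁ / L := by
        rw [Real.rpow_sub hL, Real.rpow_one, hLc]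
      rw [hL1] at hp
      rw [div_le_div_iff₀ hc hL]
      calc θ₂ * t ^ (θ₂ - 1) * L ≤ θ₂ * (2 * (R ^ θ₁ / L)) * L := by
            exact mul_le_mul_of_nonneg_right
              (mul_le_mul_of_nonneg_left hp hθ₂0.le) hL.le
        _ = 2 * θ₂ * R ^ θ₁ := by field_simp
    have hb2 : θ₂ * ((θ₂ - 1) * t ^ (θ₂ - 2)) / R ^ θ₁ ≤ 2 * (θ₂ * (θ₂ - 1)) / L ^ 2 := by
      have hp := hpow (θ₂ - 2) (by linarith) (by linarith)
      have hL2 : L ^ (θ₂ - 2) = R ^ θ₁ / L ^ 2 := by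
        rw [Real.rpow_sub hL, Real.rpow_two, hLc]
      rw [hL2] at hp
      have hL2' : (0:ℝ) < L ^ 2 := by positivity
      rw [div_le_div_iff₀ hc hL2']
      have ht22 : 0 ≤ θ₂ - 1 := by linarith
      calc θ₂ * ((θ₂ - 1) * t ^ (θ₂ - 2)) * L ^ 2
          ≤ θ₂ * ((θ₂ - 1) * (2 * (R ^ θ₁ / L ^ 2))) * L ^ 2 := by
            apply mul_le_mul_of_nonneg_right _ hL2'.le
            apply mul_le_mul_of_nonneg_left _ hθ₂0.le
            exact mul_le_mul_of_nonneg_left hp ht22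
        _ = 2 * (θ₂ * (θ₂ - 1)) * R ^ θ₁ := by field_simp
    have hs0 : 0 ≤ s := div_nonneg (by linarith) hc.le
    have hs2 : s ≤ 2 := by
      rw [hs_def, div_le_iff₀ hc]; linarith
    have e1 : |deriv (deriv φ) s| ≤ |M₂| + 1 := by
      have := hM₂ s ⟨hs0, hs2⟩
      rw [Real.norm_eq_abs] at this
      linarith [le_abs_self M₂]
    have e2 : |deriv φ s| ≤ |M₁| + 1 := by
      have := hM₁ s ⟨hs0, hs2⟩
      rw [Real.norm_eq_abs] at this
      linarith [le_abs_self M₁]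
    have hP : (0:ℝ) ≤ (θ₂ * t ^ (θ₂ - 1) / R ^ θ₁) ^ 2 := sq_nonneg _
    have htm2 : 0 ≤ t ^ (θ₂ - 2) := Real.rpow_nonneg ht _
    have hQ : (0:ℝ) ≤ θ₂ * ((θ₂ - 1) * t ^ (θ₂ - 2)) / R ^ θ₁ := by
      apply div_nonneg _ hc.le
      apply mul_nonneg hθ₂0.le
      exact mul_nonneg (by linarith) htm2
    have hRL : R ^ (2 * θ₁ / θ₂) = L ^ 2 := by
      have he : 2 * θ₁ / θ₂ = θ₁ / θ₂ * 2 := by ring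
      rw [he, Real.rpow_mul hR0.le, Real.rpow_two]
    have hbig : |deriv (deriv φ) s * (θ₂ * t ^ (θ₂ - 1) / R ^ θ₁) ^ 2
        + deriv φ s * (θ₂ * ((θ₂ - 1) * t ^ (θ₂ - 2)) / R ^ θ₁)|
        ≤ (|M₂| + 1) * (2 * θ₂ / L) ^ 2 + (|M₁| + 1) * (2 * (θ₂ * (θ₂ - 1)) / L ^ 2) := by
      refine le_trans (abs_add_le _ _) ?_
      rw [abs_mul, abs_mul]
      have hfac1 : (θ₂ * t ^ (θ₂ - 1) / R ^ θ₁) ^ 2 ≤ (2 * θ₂ / L) ^ 2 := by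
        apply sq_le_sq'
        · have : 0 ≤ θ₂ * t ^ (θ₂ - 1) / R ^ θ₁ := by positivity
          have h2p : 0 ≤ 2 * θ₂ / L := by positivity
          linarith
        · exact hb1
      have t1 : |deriv (deriv φ) s| * |(θ₂ * t ^ (θ₂ - 1) / R ^ θ₁) ^ 2|
          ≤ (|M₂| + 1) * (2 * θ₂ / L) ^ 2 := by
        rw [abs_of_nonneg hP]
        exact mul_le_mul e1 hfac1 hP (by positivity)
      have t2 : |deriv φ s| * |θ₂ * ((θ₂ - 1) * t ^ (θ₂ - 2)) / R ^ θ₁|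
          ≤ (|M₁| + 1) * (2 * (θ₂ * (θ₂ - 1)) / L ^ 2) := by
        rw [abs_of_nonneg hQ]
        exact mul_le_mul e2 hb2 hQ (by positivity)
      linarith
    rw [hRL, mul_one]
    refine le_trans hbig (le_of_eq ?_)
    have hLne : L ≠ 0 := ne_of_gt hL
    field_simp
    ring
  · rw [Set.indicator_of_notMem hmem, mul_zero]
    have hnm : ¬(R ^ θ₁ ≤ a + t ^ θ₂ ∧ a + t ^ θ₂ ≤ 2 * R ^ θ₁) := by
      intro h
      exact hmem ⟨ht, h.1, h.2⟩
    rcases lt_or_ge (a + t ^ θ₂) (R ^ θ₁) with hlo | hge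
    · have hs0 : 0 ≤ s := div_nonneg (by linarith) hc.le
      have hs1 : s < 1 := by
        rw [hs_def, div_lt_one hc]; linarith
      obtain ⟨hd1, hd2⟩ := vanish_lo' φ hφsm hφ1 s ⟨hs0, hs1⟩
      rw [hd1, hd2]; simp
    · have h2c : 2 * R ^ θ₁ < a + t ^ θ₂ := by
        by_contra hcon
        push_neg at hcon
        exact hnm ⟨hge, hcon⟩
      have hs2 : 2 < s := by
        rw [hs_def, lt_div_iff₀ hc]; linarith
      obtain ⟨hd1, hd2⟩ := vanish_hi' φ hφ0 s hs2
      rw [hd1, hd2]; simp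

end GraphWave
end

section
/- Let V be a locally finite, connected weighted graph satisfying Assumption A (with data x₀, R₀, α, and pseudo-metric d with jump size j), let δ > 0 and s ≥ 2. Let ψ ∈ C²([−j,∞)) be positive with ψ' ≤ 0, ψ ≡ 1 on [−j,1] and ψ(r) = e^{−δr} for r ≥ 2, let η ∈ C²([0,∞)) be non-negative and compactly supported with η' ≤ 0, η ≡ 1 on [0,1], η ≡ 0 on [2,∞), and for R > 0 set φ_R(x,t) = η(t/R^{(1+α)/2})^s · ψ((d(x,x₀)−j)/R). Let Q_R = V × [R^{(1+α)/2}, 2R^{(1+α)/2}]. Then there exists a constant C > 0 such that for every R ≥ R₀ and every (x,t) ∈ V×[0,∞), |∂²_t φ_R(x,t)| ≤ C·R^{−(1+α)}·η(t/R^{(1+α)/2})^{s−2}·e^{−δ d(x,x₀)/R}·1_{Q_R}(x,t). -/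
open MeasureTheory Filter

namespace GraphWave

variable {V : Type*}

/-- If a differentiable function is constant on a right neighbourhood `[a, b)` of `a`,
then its derivative at `a` vanishes. -/
private lemma deriv_eq_zero_of_right_const {f : ℝ → ℝ} {a b : ℝ} (hab : a < b)
    (hf : DifferentiableAt ℝ f a) (hconst : ∀ x ∈ Set.Ico a b, f x = f a) :
    deriv f a = 0 := by
  have h1 : HasDerivWithinAt f (deriv f a) (Set.Ioi a) a :=
    hf.hasDerivAt.hasDerivWithinAt
  rw [hasDerivWithinAt_iff_tendsto_slope] at h1
  have hs : Set.Ioi a \ {a} = Set.Ioi a := by simp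
  rw [hs] at h1
  have he : slope f a =ᶠ[nhdsWithin a (Set.Ioi a)] fun _ => (0 : ℝ) := by
    filter_upwards [Ioo_mem_nhdsGT_of_mem ⟨le_refl a, hab⟩] with x hx
    have hfa : f x = f a := hconst x ⟨hx.1.le, hx.2⟩
    simp [slope_def_field, hfa]
  have h2 : Filter.Tendsto (slope f a) (nhdsWithin a (Set.Ioi a)) (nhds 0) :=
    Filter.Tendsto.congr' he.symm tendsto_const_nhds
  exact tendsto_nhds_unique h1 h2

set_option maxHeartbeats 1000000 in
/-- Lemma (exponential cut-off): bound on `|∂²_t φ_R|`. -/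
theorem dtt_expcutoff_bound {V : Type*} [Countable V] [Infinite V]
    (G : WeightedGraph V) (d : V → V → ℝ) (x₀ : V) (R₀ α : ℝ)
    (hLF : G.LocallyFinite) (hConn : G.Connected)
    (hA : AssumptionA G d x₀ R₀ α)
    (j : ℝ) (hj : IsLUB (jumpSet G d) j) (hj0 : 0 ≤ j)
    (δ s : ℝ) (hδ : 0 < δ) (hs : 2 ≤ s)
    (ψ : ℝ → ℝ) (hψsm : ContDiff ℝ 2 ψ) (hψpos : ∀ r, 0 < ψ r)
    (hψ' : ∀ r, -j ≤ r → deriv ψ r ≤ 0)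
    (hψ1 : ∀ r ∈ Set.Icc (-j) (1 : ℝ), ψ r = 1)
    (hψexp : ∀ r, 2 ≤ r → ψ r = Real.exp (-δ * r))
    (η : ℝ → ℝ) (hηsm : ContDiff ℝ 2 η) (hηnn : ∀ r, 0 ≤ η r)
    (hηspt : HasCompactSupport η)
    (hη' : ∀ r, 0 ≤ r → deriv η r ≤ 0)
    (hη1 : ∀ r ∈ Set.Icc (0 : ℝ) 1, η r = 1)
    (hη0 : ∀ r, 2 ≤ r → η r = 0) :
    ∃ C > 0, ∀ R ≥ R₀, ∀ (x : V) (t : ℝ), 0 ≤ t →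
      |deriv (deriv (fun τ => η (τ / R ^ ((1 + α) / 2)) ^ s * ψ ((d x x₀ - j) / R))) t| ≤
        C / R ^ (1 + α) * η (t / R ^ ((1 + α) / 2)) ^ (s - 2) *
          Real.exp (-δ * d x x₀ / R) *
          Set.indicator (Set.Icc (R ^ ((1 + α) / 2)) (2 * R ^ ((1 + α) / 2)))
            (fun _ => (1 : ℝ)) t := by
  classical
  have hs1 : (1 : ℝ) ≤ s := by linarith
  have hs1' : (1 : ℝ) ≤ s - 1 := by linarith
  have hR₀pos : 0 < R₀ := hA.R₀_pos
  -- smoothness facts for η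
  have hηd : Differentiable ℝ η := hηsm.differentiable (by norm_num)
  have hηsm2 : ContDiff ℝ ((1 : ℕ) + 1) η := by
    convert hηsm using 2 <;> norm_num
  have hηsm1 : ContDiff ℝ 1 (deriv η) := (contDiff_succ_iff_deriv.mp hηsm2).2.2
  have hηd2 : Differentiable ℝ (deriv η) := hηsm1.differentiable one_ne_zero
  have hηc2 : Continuous (deriv (deriv η)) := (contDiff_one_iff_deriv.mp hηsm1).2
  -- bounds for deriv η and deriv (deriv η)
  obtain ⟨A₁, hA₁⟩ := (hηspt.deriv).exists_bound_of_continuous hηsm1.continuous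
  obtain ⟨A₂, hA₂⟩ := (hηspt.deriv.deriv).exists_bound_of_continuous hηc2
  have hA₁' : ∀ r, |deriv η r| ≤ A₁ := fun r => by
    simpa [Real.norm_eq_abs] using hA₁ r
  have hA₂' : ∀ r, |deriv (deriv η) r| ≤ A₂ := fun r => by
    simpa [Real.norm_eq_abs] using hA₂ r
  have hA₁0 : 0 ≤ A₁ := le_trans (abs_nonneg _) (hA₁' 0)
  have hA₂0 : 0 ≤ A₂ := le_trans (abs_nonneg _) (hA₂' 0)
  -- bound for ψ on a compact interval
  obtain ⟨M, hM⟩ := isCompact_Icc.exists_bound_of_continuousOn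
    (s := Set.Icc (-(j / R₀)) 2) hψsm.continuous.continuousOn
  have hM0 : 0 < M := by
    have h2mem : (2 : ℝ) ∈ Set.Icc (-(j / R₀)) 2 := by
      constructor
      · have : 0 ≤ j / R₀ := div_nonneg hj0 hR₀pos.le
        linarith
      · exact le_refl 2
    have := hM 2 h2mem
    have hp := hψpos 2
    rw [Real.norm_eq_abs, abs_of_pos hp] at this
    linarith
  -- the constant bounding ψ((D - j)/R) by Cψ * exp(-δ D / R)
  set Cψ : ℝ := max (M * Real.exp (δ * (2 + j / R₀))) (Real.exp (δ * (j / R₀))) with hCψdef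
  have hCψ0 : 0 < Cψ := lt_of_lt_of_le (Real.exp_pos _) (le_max_right _ _)
  have hψle : ∀ R, R₀ ≤ R → ∀ D : ℝ, 0 ≤ D →
      ψ ((D - j) / R) ≤ Cψ * Real.exp (-δ * D / R) := by
    intro R hR D hD
    have hR0 : 0 < R := lt_of_lt_of_le hR₀pos hR
    have hjR : j / R ≤ j / R₀ := by gcongr
    by_cases hcase : 2 ≤ (D - j) / R
    · rw [hψexp _ hcase]
      have e1 : -δ * ((D - j) / R) = δ * (j / R) + -δ * D / R := by
        field_simp; ring
      rw [e1, Real.exp_add]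
      have h1 : Real.exp (δ * (j / R)) ≤ Cψ := by
        refine le_trans ?_ (le_max_right _ _)
        exact Real.exp_le_exp.mpr (by nlinarith)
      exact mul_le_mul_of_nonneg_right h1 (Real.exp_pos _).le
    · push_neg at hcase
      have hlo : -(j / R₀) ≤ (D - j) / R := by
        have h1 : -j / R ≤ (D - j) / R := by
          rw [div_le_div_iff_of_pos_right hR0]
          linarith
        rw [neg_div] at h1
        linarith
      have hmem : (D - j) / R ∈ Set.Icc (-(j / R₀)) 2 := ⟨hlo, hcase.le⟩
      have hψM : ψ ((D - j) / R) ≤ M := by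
        have := hM _ hmem
        rwa [Real.norm_eq_abs, abs_of_pos (hψpos _)] at this
      have hDR : D / R ≤ 2 + j / R₀ := by
        have : (D - j) / R = D / R - j / R := by ring
        rw [this] at hcase
        linarith
      have hexp : Real.exp (-(δ * (2 + j / R₀))) ≤ Real.exp (-δ * D / R) := by
        apply Real.exp_le_exp.mpr
        have : -δ * D / R = -(δ * (D / R)) := by ring
        rw [this]
        nlinarith
      calc ψ ((D - j) / R) ≤ M := hψM
        _ = M * Real.exp (δ * (2 + j / R₀)) * Real.exp (-(δ * (2 + j / R₀))) := by
            rw [mul_assoc, ← Real.exp_add]; simp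
        _ ≤ Cψ * Real.exp (-δ * D / R) := by
            apply mul_le_mul (le_max_left _ _) hexp (Real.exp_pos _).le hCψ0.le
  -- derivative of η vanishes on [0,1)
  have hd1 : ∀ r ∈ Set.Ico (0 : ℝ) 1, deriv η r = 0 := by
    intro r hr
    rcases eq_or_lt_of_le hr.1 with h | h
    · rw [← h]
      refine deriv_eq_zero_of_right_const one_pos (hηd 0) ?_
      intro x hx
      rw [hη1 x ⟨hx.1, hx.2.le⟩, hη1 0 ⟨le_refl 0, zero_le_one⟩]
    · have hev : η =ᶠ[nhds r] fun _ => (1 : ℝ) := by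
        filter_upwards [Ioo_mem_nhds h hr.2] with x hx
        exact hη1 x ⟨hx.1.le, hx.2.le⟩
      rw [hev.deriv_eq]
      exact deriv_const r 1
  have hd2 : ∀ r ∈ Set.Ico (0 : ℝ) 1, deriv (deriv η) r = 0 := by
    intro r hr
    rcases eq_or_lt_of_le hr.1 with h | h
    · rw [← h]
      refine deriv_eq_zero_of_right_const one_pos (hηd2 0) ?_
      intro x hx
      rw [hd1 x hx, hd1 0 ⟨le_refl 0, one_pos⟩]
    · have hev : deriv η =ᶠ[nhds r] fun _ => (0 : ℝ) := by
        filter_upwards [Ioo_mem_nhds h hr.2] with x hx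
        exact hd1 x ⟨hx.1.le, hx.2⟩
      rw [hev.deriv_eq]
      exact deriv_const r 0
  -- derivative of η vanishes on [2,∞)
  have hd1' : ∀ r : ℝ, 2 ≤ r → deriv η r = 0 := by
    intro r hr
    rcases eq_or_lt_of_le hr with h | h
    · rw [← h]
      have hmin : IsLocalMin η 2 :=
        Filter.Eventually.of_forall fun y => by rw [hη0 2 le_rfl]; exact hηnn y
      exact hmin.deriv_eq_zero
    · have hev : η =ᶠ[nhds r] fun _ => (0 : ℝ) := by
        filter_upwards [Ioi_mem_nhds h] with x hx
        exact hη0 x hx.le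
      rw [hev.deriv_eq]
      exact deriv_const r 0
  have hd2' : ∀ r : ℝ, 2 ≤ r → deriv (deriv η) r = 0 := by
    intro r hr
    rcases eq_or_lt_of_le hr with h | h
    · rw [← h]
      refine deriv_eq_zero_of_right_const (by norm_num : (2:ℝ) < 3)
        (hηd2 2) ?_
      intro x hx
      rw [hd1' x hx.1, hd1' 2 le_rfl]
    · have hev : deriv η =ᶠ[nhds r] fun _ => (0 : ℝ) := by
        filter_upwards [Ioi_mem_nhds h] with x hx
        exact hd1' x hx.le
      rw [hev.deriv_eq]
      exact deriv_const r 0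
  -- η is at most 1 on [1,∞)
  have hanti : AntitoneOn η (Set.Ici 0) := by
    apply antitoneOn_of_deriv_nonpos (convex_Ici 0) hηsm.continuous.continuousOn
      (hηd.differentiableOn)
    intro x hx
    rw [interior_Ici] at hx
    exact hη' x (le_of_lt hx)
  have hηle1 : ∀ r : ℝ, 1 ≤ r → η r ≤ 1 := by
    intro r hr
    have := hanti (Set.mem_Ici.mpr zero_le_one) (Set.mem_Ici.mpr (by linarith)) hr
    rwa [hη1 1 ⟨zero_le_one, le_refl 1⟩] at this
  -- the constant
  refine ⟨max 1 (Cψ * (s * A₂ + s * (s - 1) * (A₁ * A₁))), lt_of_lt_of_le one_pos (le_max_left _ _), ?_⟩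
  intro R hR x t ht
  set C : ℝ := max 1 (Cψ * (s * A₂ + s * (s - 1) * (A₁ * A₁))) with hCdef
  have hR0 : 0 < R := lt_of_lt_of_le hR₀pos hR
  set c : ℝ := R ^ ((1 + α) / 2) with hc
  have hcpos : 0 < c := Real.rpow_pos_of_pos hR0 _
  set K : ℝ := ψ ((d x x₀ - j) / R) with hKdef
  have hKpos : 0 < K := hψpos _
  have hKle : K ≤ Cψ * Real.exp (-δ * d x x₀ / R) :=
    hψle R hR (d x x₀) (hA.pm.nonneg x x₀)
  -- derivative computations
  have hdiv : ∀ τ : ℝ, HasDerivAt (fun τ : ℝ => τ / c) (1 / c) τ := by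
    intro τ
    simpa using (hasDerivAt_id τ).div_const c
  have hinner : ∀ τ : ℝ, HasDerivAt (fun τ => η (τ / c)) (deriv η (τ / c) * (1 / c)) τ := by
    intro τ
    exact HasDerivAt.comp τ (hηd (τ / c)).hasDerivAt (hdiv τ)
  have hF : ∀ τ : ℝ, HasDerivAt (fun τ => η (τ / c) ^ s)
      (deriv η (τ / c) * (1 / c) * s * η (τ / c) ^ (s - 1)) τ :=
    fun τ => (hinner τ).rpow_const (Or.inr hs1)
  have hg : ∀ τ : ℝ, HasDerivAt (fun τ => η (τ / c) ^ s * K)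
      (deriv η (τ / c) * (1 / c) * s * η (τ / c) ^ (s - 1) * K) τ :=
    fun τ => (hF τ).mul_const K
  have hderiv1 : deriv (fun τ => η (τ / c) ^ s * K)
      = fun τ => (s * (1 / c) * K) * (deriv η (τ / c) * η (τ / c) ^ (s - 1)) := by
    funext τ
    rw [(hg τ).deriv]; ring
  have hG : ∀ τ : ℝ, HasDerivAt
      (fun τ => (s * (1 / c) * K) * (deriv η (τ / c) * η (τ / c) ^ (s - 1)))
      ((s * (1 / c) * K) * ((deriv (deriv η) (τ / c) * (1 / c)) * η (τ / c) ^ (s - 1)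
        + deriv η (τ / c) * (deriv η (τ / c) * (1 / c) * (s - 1) * η (τ / c) ^ (s - 2)))) τ := by
    intro τ
    have hu : HasDerivAt (fun τ => deriv η (τ / c)) (deriv (deriv η) (τ / c) * (1 / c)) τ :=
      by exact HasDerivAt.comp τ (hηd2 (τ / c)).hasDerivAt (hdiv τ)
    have hw : HasDerivAt (fun τ => η (τ / c) ^ (s - 1))
        (deriv η (τ / c) * (1 / c) * (s - 1) * η (τ / c) ^ (s - 2)) τ := by
      have h := (hinner τ).rpow_const (p := s - 1) (Or.inr hs1')
      have h21 : s - 1 - 1 = s - 2 := by ring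
      rwa [h21] at h
    exact (hu.mul hw).const_mul _
  have key : deriv (deriv (fun τ => η (τ / c) ^ s * K)) t
      = (s * (1 / c) * K) * ((deriv (deriv η) (t / c) * (1 / c)) * η (t / c) ^ (s - 1)
        + deriv η (t / c) * (deriv η (t / c) * (1 / c) * (s - 1) * η (t / c) ^ (s - 2))) := by
    rw [hderiv1]
    exact (hG t).deriv
  have hc2 : c * c = R ^ (1 + α) := by
    rw [hc, ← Real.rpow_add hR0]
    congr 1
    ring
  -- case analysis on t
  rcases lt_or_ge t c with h1 | h1
  · -- left region: the second derivative vanishes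
    have hr : t / c ∈ Set.Ico (0 : ℝ) 1 :=
      ⟨div_nonneg ht hcpos.le, (div_lt_one hcpos).mpr h1⟩
    have e1 : deriv η (t / c) = 0 := hd1 _ hr
    have e2 : deriv (deriv η) (t / c) = 0 := hd2 _ hr
    have hind : Set.indicator (Set.Icc c (2 * c)) (fun _ => (1 : ℝ)) t = 0 :=
      Set.indicator_of_notMem (fun hmem => absurd hmem.1 (not_le.mpr h1)) _
    rw [key, e1, e2, hind]
    simp
  rcases le_or_gt t (2 * c) with h2 | h2
  · -- middle region: the main estimate
    have hind : Set.indicator (Set.Icc c (2 * c)) (fun _ => (1 : ℝ)) t = 1 :=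
      Set.indicator_of_mem (Set.mem_Icc.mpr ⟨h1, h2⟩) _
    rw [key, hind, mul_one]
    by_cases ha0 : η (t / c) = 0
    · have e1 : deriv η (t / c) = 0 := by
        have hmin : IsLocalMin η (t / c) :=
          Filter.Eventually.of_forall fun y => by rw [ha0]; exact hηnn y
        exact hmin.deriv_eq_zero
      have e2 : (0 : ℝ) ^ (s - 1) = 0 := Real.zero_rpow (by linarith)
      rw [ha0, e1, e2]
      have hrhs : 0 ≤ C / R ^ (1 + α) * (0 : ℝ) ^ (s - 2) * Real.exp (-δ * d x x₀ / R) := by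
        apply mul_nonneg (mul_nonneg ?_ ?_) (Real.exp_pos _).le
        · exact div_nonneg (le_trans zero_le_one (le_max_left _ _)) (Real.rpow_nonneg hR0.le _)
        · exact Real.rpow_nonneg le_rfl _
      simpa using hrhs
    · set a : ℝ := η (t / c) with hadef
      set a1 : ℝ := deriv η (t / c) with ha1def
      set a2 : ℝ := deriv (deriv η) (t / c) with ha2def
      have hapos : 0 < a := lt_of_le_of_ne (hηnn _) (Ne.symm ha0)
      have hale1 : a ≤ 1 := hηle1 _ ((one_le_div hcpos).mpr h1)
      set p : ℝ := a ^ (s - 2) with hpdef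
      have hp0 : 0 ≤ p := Real.rpow_nonneg hapos.le _
      have hsplit : a ^ (s - 1) = p * a := by
        rw [hpdef, show s - 1 = (s - 2) + 1 by ring, Real.rpow_add hapos, Real.rpow_one]
      have heq : (s * (1 / c) * K) * ((a2 * (1 / c)) * (a ^ (s - 1))
            + a1 * (a1 * (1 / c) * (s - 1) * p))
          = (s * K / (c * c)) * (a2 * (p * a) + (s - 1) * (a1 * a1) * p) := by
        rw [hsplit]
        field_simp
      rw [heq]
      have hWnn : 0 ≤ s * K / (c * c) := by positivity
      have hW : |a2 * (p * a) + (s - 1) * (a1 * a1) * p| ≤ (A₂ + (s - 1) * (A₁ * A₁)) * p := by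
        calc |a2 * (p * a) + (s - 1) * (a1 * a1) * p|
            ≤ |a2 * (p * a)| + |(s - 1) * (a1 * a1) * p| := abs_add_le _ _
          _ = |a2| * (p * a) + (s - 1) * (a1 * a1) * p := by
              rw [abs_mul, abs_of_nonneg (by positivity : (0:ℝ) ≤ p * a),
                abs_of_nonneg (mul_nonneg (mul_nonneg (by linarith) (mul_self_nonneg a1)) hp0)]
          _ ≤ A₂ * p + (s - 1) * (A₁ * A₁) * p := by
              have hb1 : |a2| * (p * a) ≤ A₂ * p := by
                calc |a2| * (p * a) ≤ A₂ * (p * 1) := by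
                      apply mul_le_mul (hA₂' _) (by nlinarith) (by positivity) hA₂0
                  _ = A₂ * p := by ring
              have ha1sq : a1 * a1 ≤ A₁ * A₁ := by
                calc a1 * a1 ≤ |a1| * |a1| := by
                      rw [← abs_mul_abs_self]
                  _ ≤ A₁ * A₁ := mul_le_mul (hA₁' _) (hA₁' _) (abs_nonneg _) hA₁0
              have hb2 : (s - 1) * (a1 * a1) * p ≤ (s - 1) * (A₁ * A₁) * p := by
                apply mul_le_mul_of_nonneg_right _ hp0
                apply mul_le_mul_of_nonneg_left ha1sq (by linarith)
              linarith
          _ = (A₂ + (s - 1) * (A₁ * A₁)) * p := by ring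
      calc |(s * K / (c * c)) * (a2 * (p * a) + (s - 1) * (a1 * a1) * p)|
          = (s * K / (c * c)) * |a2 * (p * a) + (s - 1) * (a1 * a1) * p| := by
            rw [abs_mul, abs_of_nonneg hWnn]
        _ ≤ (s * K / (c * c)) * ((A₂ + (s - 1) * (A₁ * A₁)) * p) :=
            mul_le_mul_of_nonneg_left hW hWnn
        _ ≤ (s * (Cψ * Real.exp (-δ * d x x₀ / R)) / (c * c))
              * ((A₂ + (s - 1) * (A₁ * A₁)) * p) := by
            apply mul_le_mul_of_nonneg_right _ (by positivity)
            apply div_le_div_of_nonneg_right _ (by positivity)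
            exact mul_le_mul_of_nonneg_left hKle (by linarith)
        _ = (Cψ * (s * A₂ + s * (s - 1) * (A₁ * A₁))) / (c * c) * p
              * Real.exp (-δ * d x x₀ / R) := by ring
        _ ≤ C / (c * c) * p * Real.exp (-δ * d x x₀ / R) := by
            apply mul_le_mul_of_nonneg_right _ (Real.exp_pos _).le
            apply mul_le_mul_of_nonneg_right _ hp0
            apply div_le_div_of_nonneg_right (le_max_right _ _) (by positivity)
        _ = C / R ^ (1 + α) * p * Real.exp (-δ * d x x₀ / R) := by rw [hc2]
  · -- right region: the second derivative vanishes
    have hr2 : (2 : ℝ) ≤ t / c := by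
      rw [le_div_iff₀ hcpos]
      linarith
    have e1 : deriv η (t / c) = 0 := hd1' _ hr2
    have e2 : deriv (deriv η) (t / c) = 0 := hd2' _ hr2
    have hind : Set.indicator (Set.Icc c (2 * c)) (fun _ => (1 : ℝ)) t = 0 :=
      Set.indicator_of_notMem (fun hmem => absurd hmem.2 (not_le.mpr h2)) _
    rw [key, e1, e2, hind]
    simp

end GraphWave
end
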